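/- Let (x_t) be the iterates x_{t+1} = x_t − γ∇f_{i_t}(x_t), let τ ≥ 1 be an integer with γ·L·τ ≤ 1/(8√3), and for 0 ≤ t ≤ T let r(t) = ⌊t/τ⌋·τ and φ_j(x) = ‖∑_{l=r(t)}^{j} (∇f(x) − ∇f_{i_l}(x))‖² for r(t) ≤ j ≤ t. Then for every 0 ≤ t ≤ T, ‖∑_{j=r(t)}^{t} (∇f(x_j) − ∇f_{i_j}(x_j))‖² ≤ 3·φ_t(x_{r(t)}) + 48·γ²·L²·τ·∑_{j=r(t)}^{t} φ_j(x_{r(t)}) + 16·γ²·τ³·L²·∑_{j=r(t)}^{t} ‖∇f(x_j)‖². -/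
import Mathlib


open scoped BigOperators

lemma grad_comb {d n : ℕ} (f' : Fin n → EuclideanSpace ℝ (Fin d) → ℝ)
    (hdiff : ∀ i, Differentiable ℝ (f' i)) (c : ℝ) (y : EuclideanSpace ℝ (Fin d)) :
    gradient (fun z => c * ∑ i, f' i z) y = c • ∑ i, gradient (f' i) y := by
  have hds : DifferentiableAt ℝ (fun z : EuclideanSpace ℝ (Fin d) => ∑ i, f' i z) y := by
    apply DifferentiableAt.fun_sum
    exact fun i _ => (hdiff i).differentiableAt
  unfold gradient
  rw [fderiv_const_mul hds c, fderiv_fun_sum (fun i _ => (hdiff i).differentiableAt)]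
  simp [map_smul, map_sum]

lemma helper_cs {E : Type*} [NormedAddCommGroup E] (s : Finset ℕ) (v : ℕ → E) :
    ‖∑ i ∈ s, v i‖ ^ 2 ≤ (s.card : ℝ) * ∑ i ∈ s, ‖v i‖ ^ 2 := by
  calc ‖∑ i ∈ s, v i‖ ^ 2 ≤ (∑ i ∈ s, ‖v i‖) ^ 2 :=
        pow_le_pow_left₀ (norm_nonneg _) (norm_sum_le _ _) 2
    _ ≤ (s.card : ℝ) * ∑ i ∈ s, ‖v i‖ ^ 2 := sq_sum_le_card_mul_sum_sq

lemma helper_split {E : Type*} [NormedAddCommGroup E] (a b : E) :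
    ‖a + b‖ ^ 2 ≤ 3 * ‖a‖ ^ 2 + (3/2) * ‖b‖ ^ 2 := by
  have h := norm_add_le a b
  nlinarith [sq_nonneg (2*‖a‖ - ‖b‖), norm_nonneg (a + b), norm_nonneg a, norm_nonneg b]

lemma helper_shift (g : ℕ → ℝ) (r k : ℕ) :
    ∑ l ∈ Finset.Ico (r+1) (r+k+1), g l = ∑ j ∈ Finset.Ico r (r+k), g (j+1) := by
  rw [Finset.sum_Ico_eq_sum_range, Finset.sum_Ico_eq_sum_range]
  refine Finset.sum_congr (by congr 1; omega) fun i _ => by rw [show r+1+i = r+i+1 by omega]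

lemma helper_tel {E : Type*} [NormedAddCommGroup E] [Module ℝ E]
    (γ : ℝ) (gi : ℕ → E → E) (x : ℕ → E) (hx : ∀ t, x (t + 1) = x t - γ • gi t (x t))
    (r : ℕ) : ∀ j, r ≤ j → x j - x r = -(γ • ∑ l ∈ Finset.Ico r j, gi l (x l)) := by
  have key : ∀ c, x (r + c) - x r = -(γ • ∑ l ∈ Finset.Ico r (r + c), gi l (x l)) := by
    intro c
    induction c with
    | zero => simp
    | succ c ih =>
      have h1 : r + (c+1) = (r + c) + 1 := by omega
      rw [h1, hx (r + c), Finset.sum_Ico_succ_top (by omega : r ≤ r + c), smul_add]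
      have h2 : x (r + c) - γ • gi (r + c) (x (r + c)) - x r
          = (x (r+c) - x r) - γ • gi (r + c) (x (r + c)) := by abel
      rw [h2, ih]
      abel
  intro j hj
  have hjr : j = r + (j - r) := by omega
  rw [hjr]; exact key _

set_option maxHeartbeats 1000000 in
lemma auxcore {E : Type*} [NormedAddCommGroup E] [InnerProductSpace ℝ E]
    (L γ : ℝ) (hL : 0 < L) (hγ0 : 0 < γ) (τ : ℕ)
    (h192 : γ^2 * L^2 * (τ:ℝ)^2 ≤ 1/192)
    (gf : E → E) (gi : ℕ → E → E)
    (hlipf : ∀ y z, ‖gf y - gf z‖ ≤ L * ‖y - z‖)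
    (hlipi : ∀ j y z, ‖gi j y - gi j z‖ ≤ L * ‖y - z‖)
    (x : ℕ → E) (hx : ∀ t, x (t + 1) = x t - γ • gi t (x t))
    (r : ℕ) :
    ∀ k, k < τ →
      ‖∑ l ∈ Finset.Ico r (r+k+1), (gf (x l) - gi l (x l))‖^2 ≤
        3 * ‖∑ l ∈ Finset.Ico r (r+k+1), (gf (x r) - gi l (x r))‖^2
        + 48*γ^2*L^2*τ * ∑ j ∈ Finset.Ico r (r+k+1),
            ‖∑ l ∈ Finset.Ico r (j+1), (gf (x r) - gi l (x r))‖^2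
        + 16*γ^2*(τ:ℝ)^3*L^2 * ∑ j ∈ Finset.Ico r (r+k+1), ‖gf (x j)‖^2 := by
  intro k
  induction k using Nat.strong_induction_on with
  | _ k IH =>
  intro hkτ
  have hτR : (0:ℝ) ≤ (τ:ℝ) := by positivity
  set Sf : ℝ := ∑ j ∈ Finset.Ico r (r+k+1),
      ‖∑ l ∈ Finset.Ico r (j+1), (gf (x r) - gi l (x r))‖^2 with hSf
  set G : ℝ := ∑ j ∈ Finset.Ico r (r+k+1), ‖gf (x j)‖^2 with hG
  set P : ℝ := ‖∑ l ∈ Finset.Ico r (r+k+1), (gf (x l) - gi l (x l))‖^2 with hP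
  set Q : ℝ := ‖∑ l ∈ Finset.Ico r (r+k+1), (gf (x r) - gi l (x r))‖^2 with hQ
  set W : ℝ := ∑ l ∈ Finset.Ico r (r+k+1),
      ‖(gf (x l) - gi l (x l)) - (gf (x r) - gi l (x r))‖^2 with hW
  set X : ℝ := ∑ l ∈ Finset.Ico r (r+k+1), ‖x l - x r‖^2 with hX
  set Y : ℝ := ∑ l ∈ Finset.Ico r (r+k+1),
      ‖∑ l' ∈ Finset.Ico r l, (gf (x l') - gi l' (x l'))‖^2 with hY
  set Z : ℝ := ∑ l ∈ Finset.Ico r (r+k+1),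
      ‖∑ l' ∈ Finset.Ico r l, (gf (x r) - gi l' (x r))‖^2 with hZ
  have hSf0 : 0 ≤ Sf := by rw [hSf]; positivity
  have hG0 : 0 ≤ G := by rw [hG]; positivity
  have hcard : ((Finset.Ico r (r+k+1)).card : ℝ) ≤ (τ:ℝ) := by
    rw [Nat.card_Ico]
    exact_mod_cast (by omega : r + k + 1 - r ≤ τ)
  have htel := helper_tel γ gi x hx r
  -- termwise Lipschitz bound
  have hab : ∀ l, ‖(gf (x l) - gi l (x l)) - (gf (x r) - gi l (x r))‖^2
      ≤ 4*L^2*‖x l - x r‖^2 := by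
    intro l
    have h1 : (gf (x l) - gi l (x l)) - (gf (x r) - gi l (x r))
        = (gf (x l) - gf (x r)) - (gi l (x l) - gi l (x r)) := by abel
    have h2 : ‖(gf (x l) - gi l (x l)) - (gf (x r) - gi l (x r))‖ ≤ 2*L*‖x l - x r‖ := by
      rw [h1]
      calc ‖(gf (x l) - gf (x r)) - (gi l (x l) - gi l (x r))‖
          ≤ ‖gf (x l) - gf (x r)‖ + ‖gi l (x l) - gi l (x r)‖ := norm_sub_le _ _
        _ ≤ L*‖x l - x r‖ + L*‖x l - x r‖ := add_le_add (hlipf _ _) (hlipi _ _ _)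
        _ = 2*L*‖x l - x r‖ := by ring
    have h3 := pow_le_pow_left₀ (norm_nonneg _) h2 2
    calc ‖(gf (x l) - gi l (x l)) - (gf (x r) - gi l (x r))‖^2
        ≤ (2*L*‖x l - x r‖)^2 := h3
      _ = 4*L^2*‖x l - x r‖^2 := by ring
  have c2 : W ≤ 4*L^2*X := by
    rw [hW, hX, Finset.mul_sum]
    exact Finset.sum_le_sum fun l _ => hab l
  -- distance bound
  have hxb : ∀ l ∈ Finset.Ico r (r+k+1), ‖x l - x r‖^2
      ≤ 2*γ^2*‖∑ l' ∈ Finset.Ico r l, (gf (x l') - gi l' (x l'))‖^2 + 2*γ^2*((τ:ℝ)*G) := by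
    intro l hl
    obtain ⟨hrl, hlm⟩ := Finset.mem_Ico.mp hl
    have ht := htel l hrl
    have hsub : (∑ l' ∈ Finset.Ico r l, gi l' (x l'))
        = (∑ l' ∈ Finset.Ico r l, gf (x l'))
          - ∑ l' ∈ Finset.Ico r l, (gf (x l') - gi l' (x l')) := by
      simp only [Finset.sum_sub_distrib]; abel
    have hn : ‖x l - x r‖ = γ * ‖∑ l' ∈ Finset.Ico r l, gi l' (x l')‖ := by
      rw [ht, norm_neg, norm_smul, Real.norm_eq_abs, abs_of_pos hγ0]
    have hgf2 : ‖∑ l' ∈ Finset.Ico r l, gf (x l')‖^2 ≤ (τ:ℝ) * G := by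
      calc ‖∑ l' ∈ Finset.Ico r l, gf (x l')‖^2
          ≤ ((Finset.Ico r l).card : ℝ) * ∑ l' ∈ Finset.Ico r l, ‖gf (x l')‖^2 :=
            helper_cs _ _
        _ ≤ (τ:ℝ) * G := by
            rw [hG]
            apply mul_le_mul
            · rw [Nat.card_Ico]; exact_mod_cast (by omega : l - r ≤ τ)
            · exact Finset.sum_le_sum_of_subset_of_nonneg
                (Finset.Ico_subset_Ico_right (by omega)) (fun _ _ _ => by positivity)
            · positivity
            · exact hτR
    have hni : ‖∑ l' ∈ Finset.Ico r l, gi l' (x l')‖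
        ≤ ‖∑ l' ∈ Finset.Ico r l, gf (x l')‖
          + ‖∑ l' ∈ Finset.Ico r l, (gf (x l') - gi l' (x l'))‖ := by
      rw [hsub]; exact norm_sub_le _ _
    have h1 : ‖x l - x r‖^2 = γ^2 * ‖∑ l' ∈ Finset.Ico r l, gi l' (x l')‖^2 := by
      rw [hn]; ring
    have h2a := pow_le_pow_left₀ (norm_nonneg _) hni 2
    have h2 : ‖∑ l' ∈ Finset.Ico r l, gi l' (x l')‖^2
        ≤ 2*‖∑ l' ∈ Finset.Ico r l, gf (x l')‖^2
          + 2*‖∑ l' ∈ Finset.Ico r l, (gf (x l') - gi l' (x l'))‖^2 := by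
      have h2b : (‖∑ l' ∈ Finset.Ico r l, gf (x l')‖
          + ‖∑ l' ∈ Finset.Ico r l, (gf (x l') - gi l' (x l'))‖)^2
          ≤ 2*‖∑ l' ∈ Finset.Ico r l, gf (x l')‖^2
            + 2*‖∑ l' ∈ Finset.Ico r l, (gf (x l') - gi l' (x l'))‖^2 := by
        nlinarith [sq_nonneg (‖∑ l' ∈ Finset.Ico r l, gf (x l')‖
          - ‖∑ l' ∈ Finset.Ico r l, (gf (x l') - gi l' (x l'))‖)]
      linarith
    have h3 := mul_le_mul_of_nonneg_left h2 (sq_nonneg γ)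
    have h4 := mul_le_mul_of_nonneg_left hgf2 (by positivity : (0:ℝ) ≤ 2*γ^2)
    rw [h1]; linarith
  have c3 : X ≤ 2*γ^2*Y + (τ:ℝ)*(2*γ^2*((τ:ℝ)*G)) := by
    have hs : X ≤ ∑ l ∈ Finset.Ico r (r+k+1),
        (2*γ^2*‖∑ l' ∈ Finset.Ico r l, (gf (x l') - gi l' (x l'))‖^2
          + 2*γ^2*((τ:ℝ)*G)) := by
      rw [hX]; exact Finset.sum_le_sum hxb
    rw [Finset.sum_add_distrib, Finset.sum_const, ← Finset.mul_sum, nsmul_eq_mul] at hs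
    have hconst : ((Finset.Ico r (r+k+1)).card : ℝ) * (2*γ^2*((τ:ℝ)*G))
        ≤ (τ:ℝ)*(2*γ^2*((τ:ℝ)*G)) := by
      apply mul_le_mul_of_nonneg_right hcard
      have h := mul_nonneg (mul_nonneg (by positivity : (0:ℝ) ≤ 2*γ^2) hτR) hG0
      nlinarith [h]
    rw [hY]; linarith
  -- partial-sum bound using IH
  have hY5 : ∀ l ∈ Finset.Ico r (r+k+1),
      ‖∑ l' ∈ Finset.Ico r l, (gf (x l') - gi l' (x l'))‖^2
        ≤ 3*‖∑ l' ∈ Finset.Ico r l, (gf (x r) - gi l' (x r))‖^2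
          + (48*γ^2*L^2*(τ:ℝ) * Sf + 16*γ^2*(τ:ℝ)^3*L^2 * G) := by
    intro l hl
    obtain ⟨hrl, hlm⟩ := Finset.mem_Ico.mp hl
    have hD0 : (0:ℝ) ≤ 48*γ^2*L^2*(τ:ℝ) := by positivity
    have hE0 : (0:ℝ) ≤ 16*γ^2*(τ:ℝ)^3*L^2 := by positivity
    rcases Nat.eq_or_lt_of_le hrl with he | hlt
    · rw [← he]
      simp only [Finset.Ico_self, Finset.sum_empty, norm_zero]
      have := mul_nonneg hD0 hSf0
      have := mul_nonneg hE0 hG0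
      norm_num
      linarith
    · have hk' : l = r + (l - r - 1) + 1 := by omega
      have IHl := IH (l - r - 1) (by omega) (by omega)
      rw [← hk'] at IHl
      have hs1 : ∑ j ∈ Finset.Ico r l,
          ‖∑ l' ∈ Finset.Ico r (j+1), (gf (x r) - gi l' (x r))‖^2 ≤ Sf := by
        rw [hSf]
        exact Finset.sum_le_sum_of_subset_of_nonneg
          (Finset.Ico_subset_Ico_right (by omega)) (fun _ _ _ => by positivity)
      have hs2 : ∑ j ∈ Finset.Ico r l, ‖gf (x j)‖^2 ≤ G := by
        rw [hG]
        exact Finset.sum_le_sum_of_subset_of_nonneg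
          (Finset.Ico_subset_Ico_right (by omega)) (fun _ _ _ => by positivity)
      have hm1 := mul_le_mul_of_nonneg_left hs1 hD0
      have hm2 := mul_le_mul_of_nonneg_left hs2 hE0
      linarith [IHl]
  have hDE0 : (0:ℝ) ≤ 48*γ^2*L^2*(τ:ℝ) * Sf + 16*γ^2*(τ:ℝ)^3*L^2 * G := by
    have := mul_nonneg (by positivity : (0:ℝ) ≤ 48*γ^2*L^2*(τ:ℝ)) hSf0
    have := mul_nonneg (by positivity : (0:ℝ) ≤ 16*γ^2*(τ:ℝ)^3*L^2) hG0
    linarith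
  have c4 : Y ≤ 3*Z + (τ:ℝ)*(48*γ^2*L^2*(τ:ℝ) * Sf + 16*γ^2*(τ:ℝ)^3*L^2 * G) := by
    have hs : Y ≤ ∑ l ∈ Finset.Ico r (r+k+1),
        (3*‖∑ l' ∈ Finset.Ico r l, (gf (x r) - gi l' (x r))‖^2
          + (48*γ^2*L^2*(τ:ℝ) * Sf + 16*γ^2*(τ:ℝ)^3*L^2 * G)) := by
      rw [hY]; exact Finset.sum_le_sum hY5
    rw [Finset.sum_add_distrib, Finset.sum_const, ← Finset.mul_sum, nsmul_eq_mul] at hs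
    have hconst := mul_le_mul_of_nonneg_right hcard hDE0
    rw [hZ]; linarith
  have c5 : Z ≤ Sf := by
    rw [hZ, Finset.sum_eq_sum_Ico_succ_bot (by omega : r < r+k+1)]
    simp only [Finset.Ico_self, Finset.sum_empty, norm_zero]
    rw [helper_shift (fun l => ‖∑ l' ∈ Finset.Ico r l, (gf (x r) - gi l' (x r))‖^2) r k]
    have : ∑ j ∈ Finset.Ico r (r+k),
        ‖∑ l' ∈ Finset.Ico r (j+1), (gf (x r) - gi l' (x r))‖^2 ≤ Sf := by
      rw [hSf]
      exact Finset.sum_le_sum_of_subset_of_nonneg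
        (Finset.Ico_subset_Ico_right (by omega)) (fun _ _ _ => by positivity)
    linarith
  have c1 : P ≤ 3*Q + (3/2)*((τ:ℝ)*W) := by
    have hsplit : (∑ l ∈ Finset.Ico r (r+k+1), (gf (x l) - gi l (x l)))
        = (∑ l ∈ Finset.Ico r (r+k+1), (gf (x r) - gi l (x r)))
          + ∑ l ∈ Finset.Ico r (r+k+1),
              ((gf (x l) - gi l (x l)) - (gf (x r) - gi l (x r))) := by
      simp only [Finset.sum_sub_distrib]; abel
    have h1 : P ≤ 3*Q + (3/2)*‖∑ l ∈ Finset.Ico r (r+k+1),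
        ((gf (x l) - gi l (x l)) - (gf (x r) - gi l (x r)))‖^2 := by
      rw [hP, hQ, hsplit]; exact helper_split _ _
    have h2 : ‖∑ l ∈ Finset.Ico r (r+k+1),
        ((gf (x l) - gi l (x l)) - (gf (x r) - gi l (x r)))‖^2 ≤ (τ:ℝ) * W := by
      refine le_trans (helper_cs _ _) ?_
      rw [hW]
      apply mul_le_mul_of_nonneg_right hcard (by positivity)
    linarith [h1, h2]
  -- final combination
  have m2 := mul_le_mul_of_nonneg_left c2 (by positivity : (0:ℝ) ≤ (3/2)*(τ:ℝ))
  have m3 := mul_le_mul_of_nonneg_left c3 (by positivity : (0:ℝ) ≤ 6*L^2*(τ:ℝ))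
  have m4 := mul_le_mul_of_nonneg_left c4 (by positivity : (0:ℝ) ≤ 12*γ^2*L^2*(τ:ℝ))
  have m5 := mul_le_mul_of_nonneg_left c5 (by positivity : (0:ℝ) ≤ 36*γ^2*L^2*(τ:ℝ))
  have k1 := mul_le_mul_of_nonneg_left h192
    (mul_nonneg (by positivity : (0:ℝ) ≤ 576*γ^2*L^2*(τ:ℝ)) hSf0)
  have k2 := mul_le_mul_of_nonneg_left h192
    (mul_nonneg (by positivity : (0:ℝ) ≤ 192*γ^2*L^2*(τ:ℝ)^3) hG0)
  have s1 : (0:ℝ) ≤ γ^2*L^2*(τ:ℝ)*Sf :=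
    mul_nonneg (by positivity) hSf0
  have s2 : (0:ℝ) ≤ γ^2*L^2*(τ:ℝ)^3*G :=
    mul_nonneg (by positivity) hG0
  linarith [c1, m2, m3, m4, m5, k1, k2, s1, s2]

/-- Main Lemma (Lemma 1, eq. (13)): bound on the accumulated deviation between
stochastic and full gradients over one correlated period. Here `r t = (t / τ) * τ`
(with natural division) and `φ j y = ‖∑_{l = r t}^{j} (∇f y - ∇f_{i_l} y)‖²`. -/
theorem stmt_1
    (d n : ℕ) (hd : 1 ≤ d) (hn : 1 ≤ n)
    (L : ℝ) (hL : 0 < L)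
    (f' : Fin n → EuclideanSpace ℝ (Fin d) → ℝ)
    (hdiff : ∀ i, Differentiable ℝ (f' i))
    (hlip : ∀ i (x y : EuclideanSpace ℝ (Fin d)),
      ‖gradient (f' i) x - gradient (f' i) y‖ ≤ L * ‖x - y‖)
    (f : EuclideanSpace ℝ (Fin d) → ℝ)
    (hf : f = fun x => (1 / n : ℝ) * ∑ i, f' i x)
    (γ : ℝ) (hγ0 : 0 < γ)
    (T : ℕ)
    (idx : ℕ → Fin n)
    (x : ℕ → EuclideanSpace ℝ (Fin d))
    (hx : ∀ t, x (t + 1) = x t - γ • gradient (f' (idx t)) (x t))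
    (τ : ℕ) (hτ1 : 1 ≤ τ) (hγτ : γ * L * τ ≤ 1 / (8 * Real.sqrt 3)) :
    ∀ t ≤ T,
      ‖∑ j ∈ Finset.Icc (t / τ * τ) t,
          (gradient f (x j) - gradient (f' (idx j)) (x j))‖ ^ 2 ≤
        3 * ‖∑ l ∈ Finset.Icc (t / τ * τ) t,
              (gradient f (x (t / τ * τ)) -
                gradient (f' (idx l)) (x (t / τ * τ)))‖ ^ 2 +
        48 * γ ^ 2 * L ^ 2 * τ *
          ∑ j ∈ Finset.Icc (t / τ * τ) t,
            ‖∑ l ∈ Finset.Icc (t / τ * τ) j,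
              (gradient f (x (t / τ * τ)) -
                gradient (f' (idx l)) (x (t / τ * τ)))‖ ^ 2 +
        16 * γ ^ 2 * τ ^ 3 * L ^ 2 *
          ∑ j ∈ Finset.Icc (t / τ * τ) t, ‖gradient f (x j)‖ ^ 2 := by
  intro t _ht
  -- Lipschitz bound for the averaged gradient
  have hgradf : ∀ y, gradient f y = (1 / n : ℝ) • ∑ i, gradient (f' i) y := by
    intro y; rw [hf]; exact grad_comb f' hdiff _ y
  have hn0 : (0:ℝ) < n := by exact_mod_cast hn
  have hlipf : ∀ y z, ‖gradient f y - gradient f z‖ ≤ L * ‖y - z‖ := by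
    intro y z
    rw [hgradf y, hgradf z, ← smul_sub, ← Finset.sum_sub_distrib, norm_smul,
      Real.norm_eq_abs, abs_of_pos (by positivity)]
    calc (1/n : ℝ) * ‖∑ i, (gradient (f' i) y - gradient (f' i) z)‖
        ≤ (1/n : ℝ) * ∑ i, ‖gradient (f' i) y - gradient (f' i) z‖ :=
          mul_le_mul_of_nonneg_left (norm_sum_le _ _) (by positivity)
      _ ≤ (1/n : ℝ) * ∑ _i : Fin n, L * ‖y - z‖ :=
          mul_le_mul_of_nonneg_left (Finset.sum_le_sum fun i _ => hlip i y z) (by positivity)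
      _ = L * ‖y - z‖ := by
          rw [Finset.sum_const, Finset.card_univ, Fintype.card_fin, nsmul_eq_mul]
          field_simp
  -- the step-size condition squared
  have h192 : γ^2 * L^2 * (τ:ℝ)^2 ≤ 1/192 := by
    have hs3 : Real.sqrt 3 ^ 2 = 3 := Real.sq_sqrt (by norm_num)
    have hb : (0:ℝ) ≤ γ * L * τ := by positivity
    have h2 := pow_le_pow_left₀ hb hγτ 2
    have h3 : (1 / (8 * Real.sqrt 3) : ℝ)^2 = 1/192 := by
      rw [div_pow, mul_pow, hs3]; norm_num
    calc γ^2*L^2*(τ:ℝ)^2 = (γ*L*(τ:ℝ))^2 := by ring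
      _ ≤ (1/(8*Real.sqrt 3))^2 := h2
      _ = 1/192 := h3
  have hτ0 : 0 < τ := hτ1
  set r := t / τ * τ with hr
  have hrt : r ≤ t := Nat.div_mul_le_self t τ
  have hlt : t < r + τ := Nat.lt_div_mul_add hτ0
  have hkτ : t - r < τ := by omega
  have hgoal := auxcore L γ hL hγ0 τ h192 (gradient f)
    (fun j => gradient (f' (idx j))) hlipf (fun j => hlip (idx j)) x hx r (t - r) hkτ
  have h3 : r + (t - r) + 1 = t + 1 := by omega
  rw [h3] at hgoal
  simp only [← Finset.Ico_add_one_right_eq_Icc]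
  exact hgoal
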